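/- For every u, v in H, B(u,v) defines a bounded linear functional on V, and its dual norm satisfies ‖B(u,v)‖_{V'} ≤ C₁ |u| |v|, where C₁ = |a|(λ^{-1} + λ) + |b|(λ^{-1} + 1); explicitly, |⟨B(u,v), w⟩| ≤ C₁ |u| |v| ‖w‖ for all w in V. -/
import Mathlib


open scoped BigOperators
open MeasureTheory Filter Topology

noncomputable section

namespace Sabra

/-- Wavenumber of the shell with 0-based index `n` (paper index `n+1`): `k₀ λ^(n+1)`. -/
def kwav (k0 lam : ℝ) (n : ℕ) : ℝ := k0 * lam ^ (n + 1)

/-- Wavenumber for an integer paper index `j`: `k₀ λ^j`. -/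
def kz (k0 lam : ℝ) (j : ℤ) : ℝ := k0 * lam ^ j

/-- Extend a sequence `(u₁, u₂, …)` (stored at 0-based indices `0,1,…`) to integer paper
indices, with the convention `u_j = 0` for `j ≤ 0`. -/
def extz (u : ℕ → ℂ) (j : ℤ) : ℂ := if 0 < j then u (j.toNat - 1) else 0

/-- The sabra shell model bilinear map `B(u,v)`, componentwise: the component with 0-based
index `m` corresponds to the paper index `n = m+1`, and equals
`-i (a k_{n+1} v_{n+2} u*_{n+1} + b k_n v_{n+1} u*_{n-1} + a k_{n-1} u_{n-1} v_{n-2}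
  + b k_{n-1} v_{n-1} u_{n-2})`. -/
def sabraB (a b k0 lam : ℝ) (u v : ℕ → ℂ) : ℕ → ℂ := fun m =>
  -Complex.I *
    ((a : ℂ) * (kz k0 lam ((m : ℤ) + 2) : ℂ) * extz v ((m : ℤ) + 3)
        * starRingEnd ℂ (extz u ((m : ℤ) + 2))
      + (b : ℂ) * (kz k0 lam ((m : ℤ) + 1) : ℂ) * extz v ((m : ℤ) + 2)
        * starRingEnd ℂ (extz u (m : ℤ))
      + (a : ℂ) * (kz k0 lam (m : ℤ) : ℂ) * extz u (m : ℤ) * extz v ((m : ℤ) - 1)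
      + (b : ℂ) * (kz k0 lam (m : ℤ) : ℂ) * extz v (m : ℤ) * extz u ((m : ℤ) - 1))

/-- The inner product of `H = ℓ²`: `(u,v) = Σ uₙ vₙ*`. -/
def Hinner (u v : ℕ → ℂ) : ℂ := ∑' n, u n * starRingEnd ℂ (v n)

/-- The norm of `H = ℓ²`. -/
def Hnorm (u : ℕ → ℂ) : ℝ := Real.sqrt (∑' n, ‖u n‖ ^ 2)

/-- Membership in `H = ℓ²`. -/
def memH (u : ℕ → ℂ) : Prop := Summable (fun n => ‖u n‖ ^ 2)

/-- The norm of `V = D(A^{1/2})`: `‖u‖ = (Σ kₙ² |uₙ|²)^{1/2}`. -/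
def Vnorm (k0 lam : ℝ) (u : ℕ → ℂ) : ℝ :=
  Real.sqrt (∑' n, kwav k0 lam n ^ 2 * ‖u n‖ ^ 2)

/-- Membership in `V = D(A^{1/2})`. -/
def memV (k0 lam : ℝ) (u : ℕ → ℂ) : Prop :=
  Summable (fun n => kwav k0 lam n ^ 2 * ‖u n‖ ^ 2)

/-- The graph norm of `D(A)`: `|Au| = (Σ kₙ⁴ |uₙ|²)^{1/2}`. -/
def DAnorm (k0 lam : ℝ) (u : ℕ → ℂ) : ℝ :=
  Real.sqrt (∑' n, kwav k0 lam n ^ 4 * ‖u n‖ ^ 2)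

/-- Membership in `D(A)`. -/
def memDA (k0 lam : ℝ) (u : ℕ → ℂ) : Prop :=
  Summable (fun n => kwav k0 lam n ^ 4 * ‖u n‖ ^ 2)

/-- The dual norm of `V' = D(A^{-1/2})` (for an element of `V'` represented as a sequence
via the `H`-pairing): `(Σ kₙ⁻² |uₙ|²)^{1/2}`. -/
def VdualNorm (k0 lam : ℝ) (u : ℕ → ℂ) : ℝ :=
  Real.sqrt (∑' n, ‖u n‖ ^ 2 / kwav k0 lam n ^ 2)

/-- The pairing `⟨Au, v⟩ = ((u,v)) = Σ kₙ² uₙ vₙ*`. -/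
def Aform (k0 lam : ℝ) (u v : ℕ → ℂ) : ℂ :=
  ∑' n, ((kwav k0 lam n ^ 2 : ℝ) : ℂ) * u n * starRingEnd ℂ (v n)

/-- The constant `C₁ = |a|(λ⁻¹ + λ) + |b|(λ⁻¹ + 1)`. -/
def C1 (a b lam : ℝ) : ℝ := |a| * (lam⁻¹ + lam) + |b| * (lam⁻¹ + 1)

/-- The Gevrey norm `‖u‖_{G^{p,q}_τ} = (Σ e^{2τ kₙᵖ} kₙ^{2q} |uₙ|²)^{1/2}`. -/
def Gnorm (k0 lam p q τ : ℝ) (u : ℕ → ℂ) : ℝ :=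
  Real.sqrt (∑' n, Real.exp (2 * τ * kwav k0 lam n ^ p) * kwav k0 lam n ^ (2 * q) * ‖u n‖ ^ 2)

/-- Membership in the Gevrey class `G^{p,q}_τ`. -/
def memG (k0 lam p q τ : ℝ) (u : ℕ → ℂ) : Prop :=
  Summable (fun n => Real.exp (2 * τ * kwav k0 lam n ^ p) * kwav k0 lam n ^ (2 * q) * ‖u n‖ ^ 2)

/-- `u : ℝ → (ℕ → ℂ)` is a weak solution of the sabra shell model on `[0,T]` with force `f`
and initial datum `uin`: `u(0) = uin`, `u ∈ L^∞([0,T];H) ∩ L²([0,T];V)`, `u ∈ C([0,T];H)`,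
and for every `φ ∈ V` and a.e. `t`, `d/dt (u,φ) + ν⟨Au,φ⟩ + ⟨B(u,u),φ⟩ = ⟨f,φ⟩`. -/
def IsWeakSolutionOn (ν a b k0 lam T : ℝ) (f : ℝ → ℕ → ℂ) (uin : ℕ → ℂ)
    (u : ℝ → ℕ → ℂ) : Prop :=
  u 0 = uin ∧
  (∀ t ∈ Set.Icc (0 : ℝ) T, memH (u t)) ∧
  (∃ M, ∀ t ∈ Set.Icc (0 : ℝ) T, Hnorm (u t) ≤ M) ∧
  IntegrableOn (fun t => Vnorm k0 lam (u t) ^ 2) (Set.Icc (0 : ℝ) T) ∧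
  (∀ φ, memV k0 lam φ →
    ∀ᵐ t ∂(volume.restrict (Set.Ioo (0 : ℝ) T)),
      HasDerivAt (fun s => Hinner (u s) φ)
        (Hinner (f t) φ - (ν : ℂ) * Aform k0 lam (u t) φ
          - Hinner (sabraB a b k0 lam (u t) (u t)) φ) t) ∧
  (∀ t₀ ∈ Set.Icc (0 : ℝ) T,
    Tendsto (fun t => Hnorm (fun n => u t n - u t₀ n))
      (nhdsWithin t₀ (Set.Icc (0 : ℝ) T)) (nhds 0))

/-- `u : ℝ → (ℕ → ℂ)` is a weak solution of the sabra shell model on `[0,∞)`. -/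
def IsWeakSolution (ν a b k0 lam : ℝ) (f : ℝ → ℕ → ℂ) (uin : ℕ → ℂ)
    (u : ℝ → ℕ → ℂ) : Prop :=
  u 0 = uin ∧
  (∀ t, 0 ≤ t → memH (u t)) ∧
  (∀ T > (0 : ℝ), ∃ M, ∀ t ∈ Set.Icc (0 : ℝ) T, Hnorm (u t) ≤ M) ∧
  (∀ T > (0 : ℝ), IntegrableOn (fun t => Vnorm k0 lam (u t) ^ 2) (Set.Icc (0 : ℝ) T)) ∧
  (∀ φ, memV k0 lam φ →
    ∀ᵐ t ∂(volume.restrict (Set.Ioi (0 : ℝ))),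
      HasDerivAt (fun s => Hinner (u s) φ)
        (Hinner (f t) φ - (ν : ℂ) * Aform k0 lam (u t) φ
          - Hinner (sabraB a b k0 lam (u t) (u t)) φ) t) ∧
  (∀ t₀ ∈ Set.Ici (0 : ℝ),
    Tendsto (fun t => Hnorm (fun n => u t n - u t₀ n))
      (nhdsWithin t₀ (Set.Ici (0 : ℝ))) (nhds 0))

/-- The orthogonal projection onto the span of the first `m` canonical basis vectors. -/
def proj (m : ℕ) (u : ℕ → ℂ) : ℕ → ℂ := fun n => if n < m then u n else 0

/-- The `j`-th shell component in paper (1-based) indexing, with `u_0 = 0`. -/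
def shellComp (u : ℕ → ℂ) (j : ℕ) : ℂ := if j = 0 then 0 else u (j - 1)


section Aux

private lemma succ_inj : Function.Injective (fun n : ℕ => (n : ℤ) + 1) := fun a b h => by
  simpa using h

private lemma shift_inj (c : ℤ) : Function.Injective (fun m : ℕ => (m : ℤ) + c) := fun a b h => by
  simp only [add_left_inj, Nat.cast_inj] at h; exact h

private lemma extz_succ (u : ℕ → ℂ) (n : ℕ) : extz u ((n : ℤ) + 1) = u n := by
  have h : (0:ℤ) < (n:ℤ) + 1 := by positivity
  rw [extz, if_pos h]
  congr 1

private lemma extz_zero (u : ℕ → ℂ) :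
    ∀ j ∉ Set.range (fun n : ℕ => (n : ℤ) + 1), ‖extz u j‖ ^ 2 = 0 := by
  intro j hj
  have hj0 : ¬ 0 < j := fun h => hj ⟨j.toNat - 1, by simp only []; omega⟩
  simp [extz, hj0]

private lemma summable_extz {u : ℕ → ℂ} (hu : memH u) :
    Summable (fun j : ℤ => ‖extz u j‖ ^ 2) := by
  refine (succ_inj.summable_iff (extz_zero u)).mp ?_
  have h : ((fun j : ℤ => ‖extz u j‖ ^ 2) ∘ (fun n : ℕ => (n : ℤ) + 1)) = fun n => ‖u n‖ ^ 2 := by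
    funext n
    simp [Function.comp, extz_succ]
  rw [h]
  exact hu

private lemma tsum_extz (u : ℕ → ℂ) : ∑' j : ℤ, ‖extz u j‖ ^ 2 = Hnorm u ^ 2 := by
  rw [Hnorm, Real.sq_sqrt (tsum_nonneg fun n => sq_nonneg _)]
  have hsupp : Function.support (fun j : ℤ => ‖extz u j‖ ^ 2) ⊆
      Set.range (fun n : ℕ => (n : ℤ) + 1) := by
    intro j hj
    by_contra hc
    exact hj (extz_zero u j hc)
  rw [← succ_inj.tsum_eq hsupp]
  exact tsum_congr fun n => by rw [extz_succ]

private lemma extz_le {u : ℕ → ℂ} (hu : memH u) (j : ℤ) : ‖extz u j‖ ≤ Hnorm u := by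
  have h1 : ‖extz u j‖ ^ 2 ≤ Hnorm u ^ 2 := by
    rw [← tsum_extz u]
    exact Summable.le_tsum (summable_extz hu) j (fun _ _ => sq_nonneg _)
  calc ‖extz u j‖ = Real.sqrt (‖extz u j‖ ^ 2) := (Real.sqrt_sq (norm_nonneg _)).symm
    _ ≤ Real.sqrt (Hnorm u ^ 2) := Real.sqrt_le_sqrt h1
    _ = Hnorm u := Real.sqrt_sq (Real.sqrt_nonneg _)

private lemma summable_extz_shift {u : ℕ → ℂ} (hu : memH u) (c : ℤ) :
    Summable (fun m : ℕ => ‖extz u ((m : ℤ) + c)‖ ^ 2) :=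
  (summable_extz hu).comp_injective (shift_inj c)

private lemma tsum_extz_shift_le {u : ℕ → ℂ} (hu : memH u) (c : ℤ) :
    ∑' m : ℕ, ‖extz u ((m : ℤ) + c)‖ ^ 2 ≤ Hnorm u ^ 2 := by
  rw [← tsum_extz u]
  exact Summable.tsum_le_tsum_of_inj (fun m : ℕ => (m : ℤ) + c) (shift_inj c) (fun _ _ => sq_nonneg _)
    (fun _ => le_rfl) (summable_extz_shift hu c) (summable_extz hu)

private lemma tsum_cs (f g : ℕ → ℝ) (hf0 : ∀ n, 0 ≤ f n) (hg0 : ∀ n, 0 ≤ g n)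
    (hf : Summable (fun n => f n ^ 2)) (hg : Summable (fun n => g n ^ 2)) :
    Summable (fun n => f n * g n) ∧
    ∑' n, f n * g n ≤ Real.sqrt (∑' n, f n ^ 2) * Real.sqrt (∑' n, g n ^ 2) := by
  have hsum : Summable (fun n => f n * g n) := by
    refine Summable.of_nonneg_of_le (fun n => mul_nonneg (hf0 n) (hg0 n))
      (fun n => ?_) ((hf.add hg).div_const 2)
    nlinarith [sq_nonneg (f n - g n)]
  refine ⟨hsum, Summable.tsum_le_of_sum_le hsum fun s => ?_⟩
  have h1 : (∑ i ∈ s, f i * g i) ^ 2 ≤ (∑ i ∈ s, f i ^ 2) * ∑ i ∈ s, g i ^ 2 :=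
    Finset.sum_mul_sq_le_sq_mul_sq s f g
  have h2 : ∑ i ∈ s, f i * g i ≤ Real.sqrt ((∑ i ∈ s, f i ^ 2) * ∑ i ∈ s, g i ^ 2) := by
    rw [← Real.sqrt_sq (Finset.sum_nonneg fun i _ => mul_nonneg (hf0 i) (hg0 i))]
    exact Real.sqrt_le_sqrt h1
  refine h2.trans ?_
  rw [Real.sqrt_mul (Finset.sum_nonneg fun i _ => sq_nonneg _)]
  exact mul_le_mul (Real.sqrt_le_sqrt (Summable.sum_le_tsum s (fun i _ => sq_nonneg _) hf))
    (Real.sqrt_le_sqrt (Summable.sum_le_tsum s (fun i _ => sq_nonneg _) hg))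
    (Real.sqrt_nonneg _) (Real.sqrt_nonneg _)

private lemma kwav_pos {k0 lam : ℝ} (hk0 : 0 < k0) (hlam : 0 < lam) (m : ℕ) :
    0 < kwav k0 lam m := by
  rw [kwav]; positivity

private lemma piece {k0 lam : ℝ} (hk0 : 0 < k0) (hlam : 0 < lam)
    (u v w : ℕ → ℂ) (hu : memH u) (hv : memH v) (hw : memV k0 lam w) (cu cv : ℤ) :
    Summable (fun m : ℕ =>
      (kwav k0 lam m * ‖w m‖) * (‖extz u ((m : ℤ) + cu)‖ * ‖extz v ((m : ℤ) + cv)‖)) ∧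
    ∑' m : ℕ, (kwav k0 lam m * ‖w m‖) * (‖extz u ((m : ℤ) + cu)‖ * ‖extz v ((m : ℤ) + cv)‖)
      ≤ Vnorm k0 lam w * (Hnorm u * Hnorm v) := by
  have hf : Summable (fun m : ℕ => (kwav k0 lam m * ‖w m‖) ^ 2) := by
    have h : (fun m : ℕ => (kwav k0 lam m * ‖w m‖) ^ 2)
        = fun m => kwav k0 lam m ^ 2 * ‖w m‖ ^ 2 := by
      funext m; ring
    rw [h]; exact hw
  have hg : Summable (fun m : ℕ => (‖extz u ((m : ℤ) + cu)‖ * ‖extz v ((m : ℤ) + cv)‖) ^ 2) := by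
    refine Summable.of_nonneg_of_le (fun m => sq_nonneg _) (fun m => ?_)
      ((summable_extz_shift hv cv).mul_left (Hnorm u ^ 2))
    have h1 : ‖extz u ((m : ℤ) + cu)‖ ≤ Hnorm u := extz_le hu _
    have h3 : (0:ℝ) ≤ ‖extz u ((m : ℤ) + cu)‖ := norm_nonneg _
    rw [mul_pow]
    exact mul_le_mul_of_nonneg_right (pow_le_pow_left₀ h3 h1 2) (sq_nonneg _)
  obtain ⟨hs, hle⟩ := tsum_cs _ _
    (fun m => mul_nonneg (le_of_lt (kwav_pos hk0 hlam m)) (norm_nonneg _))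
    (fun m => mul_nonneg (norm_nonneg _) (norm_nonneg _)) hf hg
  refine ⟨hs, hle.trans ?_⟩
  have e1 : Real.sqrt (∑' m : ℕ, (kwav k0 lam m * ‖w m‖) ^ 2) = Vnorm k0 lam w := by
    rw [Vnorm]
    congr 1
    exact tsum_congr fun m => by ring
  have e2 : Real.sqrt (∑' m : ℕ, (‖extz u ((m : ℤ) + cu)‖ * ‖extz v ((m : ℤ) + cv)‖) ^ 2)
      ≤ Hnorm u * Hnorm v := by
    have hb : ∑' m : ℕ, (‖extz u ((m : ℤ) + cu)‖ * ‖extz v ((m : ℤ) + cv)‖) ^ 2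
        ≤ Hnorm u ^ 2 * Hnorm v ^ 2 := by
      have step : ∑' m : ℕ, (‖extz u ((m : ℤ) + cu)‖ * ‖extz v ((m : ℤ) + cv)‖) ^ 2
          ≤ ∑' m : ℕ, Hnorm u ^ 2 * ‖extz v ((m : ℤ) + cv)‖ ^ 2 := by
        refine Summable.tsum_le_tsum (fun m => ?_) hg ((summable_extz_shift hv cv).mul_left _)
        have h1 : ‖extz u ((m : ℤ) + cu)‖ ≤ Hnorm u := extz_le hu _
        have h3 : (0:ℝ) ≤ ‖extz u ((m : ℤ) + cu)‖ := norm_nonneg _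
        rw [mul_pow]
        exact mul_le_mul_of_nonneg_right (pow_le_pow_left₀ h3 h1 2) (sq_nonneg _)
      refine step.trans ?_
      rw [tsum_mul_left]
      exact mul_le_mul_of_nonneg_left (tsum_extz_shift_le hv cv) (sq_nonneg _)
    calc Real.sqrt (∑' m : ℕ, (‖extz u ((m : ℤ) + cu)‖ * ‖extz v ((m : ℤ) + cv)‖) ^ 2)
        ≤ Real.sqrt (Hnorm u ^ 2 * Hnorm v ^ 2) := Real.sqrt_le_sqrt hb
      _ = Hnorm u * Hnorm v := by
          rw [← mul_pow]
          exact Real.sqrt_sq (mul_nonneg (show (0:ℝ) ≤ Hnorm u from Real.sqrt_nonneg _)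
            (show (0:ℝ) ≤ Hnorm v from Real.sqrt_nonneg _))
  rw [e1]
  exact mul_le_mul_of_nonneg_left e2 (by rw [← e1]; exact Real.sqrt_nonneg _)

private lemma kz_eq1 {k0 lam : ℝ} (m : ℕ) : kz k0 lam ((m : ℤ) + 1) = kwav k0 lam m := by
  rw [kz, kwav, show (m : ℤ) + 1 = ((m + 1 : ℕ) : ℤ) by push_cast; ring, zpow_natCast]

private lemma kz_eq2 {k0 lam : ℝ} (hlam : 0 < lam) (m : ℕ) :
    kz k0 lam ((m : ℤ) + 2) = lam * kwav k0 lam m := by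
  rw [kz, kwav, show (m : ℤ) + 2 = ((m + 1 : ℕ) : ℤ) + 1 by push_cast; ring,
    zpow_add₀ (ne_of_gt hlam), zpow_natCast, zpow_one]
  ring

private lemma kz_eq0 {k0 lam : ℝ} (hlam : 0 < lam) (m : ℕ) :
    kz k0 lam (m : ℤ) = lam⁻¹ * kwav k0 lam m := by
  rw [kz, kwav, show (m : ℤ) = ((m + 1 : ℕ) : ℤ) + (-1) by push_cast; ring,
    zpow_add₀ (ne_of_gt hlam), zpow_natCast, zpow_neg_one]
  ring

private lemma pointwise (a b k0 lam : ℝ) (hk0 : 0 < k0) (hlam : 0 < lam)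
    (u v w : ℕ → ℂ) (m : ℕ) :
    ‖sabraB a b k0 lam u v m * starRingEnd ℂ (w m)‖ ≤
      |a| * lam * ((kwav k0 lam m * ‖w m‖) * (‖extz u ((m:ℤ) + 2)‖ * ‖extz v ((m:ℤ) + 3)‖))
      + |b| * ((kwav k0 lam m * ‖w m‖) * (‖extz u ((m:ℤ) + 0)‖ * ‖extz v ((m:ℤ) + 2)‖))
      + |a| * lam⁻¹ * ((kwav k0 lam m * ‖w m‖) * (‖extz u ((m:ℤ) + 0)‖ * ‖extz v ((m:ℤ) + (-1))‖))
      + |b| * lam⁻¹ * ((kwav k0 lam m * ‖w m‖) * (‖extz u ((m:ℤ) + (-1))‖ * ‖extz v ((m:ℤ) + 0)‖))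
    := by
  have hκ : 0 < kwav k0 lam m := kwav_pos hk0 hlam m
  have hz0 : (m : ℤ) + 0 = (m : ℤ) := add_zero _
  have hzn : (m : ℤ) + (-1) = (m : ℤ) - 1 := by ring
  rw [hz0, hzn]
  have habs2 : |kz k0 lam ((m : ℤ) + 2)| = lam * kwav k0 lam m := by
    rw [kz_eq2 hlam, abs_of_pos (by positivity)]
  have habs1 : |kz k0 lam ((m : ℤ) + 1)| = kwav k0 lam m := by
    rw [kz_eq1, abs_of_pos hκ]
  have habs0 : |kz k0 lam (m : ℤ)| = lam⁻¹ * kwav k0 lam m := by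
    rw [kz_eq0 hlam, abs_of_pos (by positivity)]
  have n1 : ‖(a : ℂ) * ((kz k0 lam ((m:ℤ) + 2) : ℝ) : ℂ) * extz v ((m:ℤ) + 3)
        * starRingEnd ℂ (extz u ((m:ℤ) + 2))‖
      = |a| * (lam * kwav k0 lam m) * (‖extz v ((m:ℤ) + 3)‖ * ‖extz u ((m:ℤ) + 2)‖) := by
    simp only [norm_mul, Complex.norm_real, Real.norm_eq_abs, RCLike.norm_conj, habs2]
    ring
  have n2 : ‖(b : ℂ) * ((kz k0 lam ((m:ℤ) + 1) : ℝ) : ℂ) * extz v ((m:ℤ) + 2)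
        * starRingEnd ℂ (extz u (m:ℤ))‖
      = |b| * kwav k0 lam m * (‖extz v ((m:ℤ) + 2)‖ * ‖extz u (m:ℤ)‖) := by
    simp only [norm_mul, Complex.norm_real, Real.norm_eq_abs, RCLike.norm_conj, habs1]
    ring
  have n3 : ‖(a : ℂ) * ((kz k0 lam (m:ℤ) : ℝ) : ℂ) * extz u (m:ℤ) * extz v ((m:ℤ) - 1)‖
      = |a| * (lam⁻¹ * kwav k0 lam m) * (‖extz u (m:ℤ)‖ * ‖extz v ((m:ℤ) - 1)‖) := by
    simp only [norm_mul, Complex.norm_real, Real.norm_eq_abs, habs0]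
    ring
  have n4 : ‖(b : ℂ) * ((kz k0 lam (m:ℤ) : ℝ) : ℂ) * extz v (m:ℤ) * extz u ((m:ℤ) - 1)‖
      = |b| * (lam⁻¹ * kwav k0 lam m) * (‖extz v (m:ℤ)‖ * ‖extz u ((m:ℤ) - 1)‖) := by
    simp only [norm_mul, Complex.norm_real, Real.norm_eq_abs, habs0]
    ring
  rw [sabraB, norm_mul, norm_mul]
  have hnI : ‖-Complex.I‖ = 1 := by simp
  have hwc : ‖starRingEnd ℂ (w m)‖ = ‖w m‖ := RCLike.norm_conj _
  rw [hnI, one_mul, hwc]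
  have hS : ‖(a : ℂ) * ((kz k0 lam ((m:ℤ) + 2) : ℝ) : ℂ) * extz v ((m:ℤ) + 3)
        * starRingEnd ℂ (extz u ((m:ℤ) + 2))
      + (b : ℂ) * ((kz k0 lam ((m:ℤ) + 1) : ℝ) : ℂ) * extz v ((m:ℤ) + 2)
        * starRingEnd ℂ (extz u (m:ℤ))
      + (a : ℂ) * ((kz k0 lam (m:ℤ) : ℝ) : ℂ) * extz u (m:ℤ) * extz v ((m:ℤ) - 1)
      + (b : ℂ) * ((kz k0 lam (m:ℤ) : ℝ) : ℂ) * extz v (m:ℤ) * extz u ((m:ℤ) - 1)‖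
      ≤ |a| * (lam * kwav k0 lam m) * (‖extz v ((m:ℤ) + 3)‖ * ‖extz u ((m:ℤ) + 2)‖)
      + |b| * kwav k0 lam m * (‖extz v ((m:ℤ) + 2)‖ * ‖extz u (m:ℤ)‖)
      + |a| * (lam⁻¹ * kwav k0 lam m) * (‖extz u (m:ℤ)‖ * ‖extz v ((m:ℤ) - 1)‖)
      + |b| * (lam⁻¹ * kwav k0 lam m) * (‖extz v (m:ℤ)‖ * ‖extz u ((m:ℤ) - 1)‖) := by
    rw [← n1, ← n2, ← n3, ← n4]
    exact (norm_add_le _ _).trans (by gcongr; exact norm_add₃_le)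
  calc ‖_ + _ + _ + _‖ * ‖w m‖ ≤ _ := mul_le_mul_of_nonneg_right hS (norm_nonneg _)
    _ = _ := by ring

end Aux

/-- for every `u, v ∈ H`, `B(u,v)` is a bounded linear functional on `V` with
`|⟨B(u,v), w⟩| ≤ C₁ |u| |v| ‖w‖` for all `w ∈ V`, where
`C₁ = |a|(λ⁻¹ + λ) + |b|(λ⁻¹ + 1)`; in particular `‖B(u,v)‖_{V'} ≤ C₁ |u| |v|`. -/
theorem sabra_nonlinear_H_H_to_Vdual
    (a b k0 lam : ℝ) (hk0 : 0 < k0) (hlam : 1 < lam)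
    (u v : ℕ → ℂ) (hu : memH u) (hv : memH v) :
    ∀ w, memV k0 lam w →
      ‖Hinner (sabraB a b k0 lam u v) w‖ ≤ C1 a b lam * Hnorm u * Hnorm v * Vnorm k0 lam w := by
  intro w hw
  have hlam0 : 0 < lam := lt_trans one_pos hlam
  obtain ⟨s1, t1⟩ := piece hk0 hlam0 u v w hu hv hw 2 3
  obtain ⟨s2, t2⟩ := piece hk0 hlam0 u v w hu hv hw 0 2
  obtain ⟨s3, t3⟩ := piece hk0 hlam0 u v w hu hv hw 0 (-1)
  obtain ⟨s4, t4⟩ := piece hk0 hlam0 u v w hu hv hw (-1) 0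
  set P1 : ℕ → ℝ := fun m =>
    (kwav k0 lam m * ‖w m‖) * (‖extz u ((m:ℤ) + 2)‖ * ‖extz v ((m:ℤ) + 3)‖) with hP1
  set P2 : ℕ → ℝ := fun m =>
    (kwav k0 lam m * ‖w m‖) * (‖extz u ((m:ℤ) + 0)‖ * ‖extz v ((m:ℤ) + 2)‖) with hP2
  set P3 : ℕ → ℝ := fun m =>
    (kwav k0 lam m * ‖w m‖) * (‖extz u ((m:ℤ) + 0)‖ * ‖extz v ((m:ℤ) + (-1))‖) with hP3
  set P4 : ℕ → ℝ := fun m =>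
    (kwav k0 lam m * ‖w m‖) * (‖extz u ((m:ℤ) + (-1))‖ * ‖extz v ((m:ℤ) + 0)‖) with hP4
  set D : ℕ → ℝ := fun m =>
    |a| * lam * P1 m + |b| * P2 m + |a| * lam⁻¹ * P3 m + |b| * lam⁻¹ * P4 m with hD
  have hDs : Summable D :=
    (((s1.mul_left (|a| * lam)).add (s2.mul_left |b|)).add
      (s3.mul_left (|a| * lam⁻¹))).add (s4.mul_left (|b| * lam⁻¹))
  have hpt : ∀ m, ‖sabraB a b k0 lam u v m * starRingEnd ℂ (w m)‖ ≤ D m := fun m =>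
    pointwise a b k0 lam hk0 hlam0 u v w m
  have hnorm : ‖Hinner (sabraB a b k0 lam u v) w‖ ≤ ∑' m, D m := by
    rw [Hinner]
    refine (norm_tsum_le_tsum_norm ?_).trans (Summable.tsum_le_tsum hpt ?_ hDs)
    · exact Summable.of_nonneg_of_le (fun m => norm_nonneg _) hpt hDs
    · exact Summable.of_nonneg_of_le (fun m => norm_nonneg _) hpt hDs
  refine hnorm.trans ?_
  have hts : ∑' m, D m = |a| * lam * ∑' m, P1 m + |b| * ∑' m, P2 m
      + |a| * lam⁻¹ * ∑' m, P3 m + |b| * lam⁻¹ * ∑' m, P4 m := by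
    rw [hD]
    rw [Summable.tsum_add (((s1.mul_left (|a| * lam)).add (s2.mul_left |b|)).add
        (s3.mul_left (|a| * lam⁻¹))) (s4.mul_left (|b| * lam⁻¹)),
      Summable.tsum_add ((s1.mul_left (|a| * lam)).add (s2.mul_left |b|)) (s3.mul_left (|a| * lam⁻¹)),
      Summable.tsum_add (s1.mul_left (|a| * lam)) (s2.mul_left |b|),
      tsum_mul_left, tsum_mul_left, tsum_mul_left, tsum_mul_left]
  rw [hts]
  have hV : 0 ≤ Vnorm k0 lam w * (Hnorm u * Hnorm v) :=
    mul_nonneg (Real.sqrt_nonneg _) (mul_nonneg (Real.sqrt_nonneg _) (Real.sqrt_nonneg _))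
  have hlaminv : 0 ≤ lam⁻¹ := le_of_lt (by positivity)
  have b1 : |a| * lam * ∑' m, P1 m ≤ |a| * lam * (Vnorm k0 lam w * (Hnorm u * Hnorm v)) :=
    mul_le_mul_of_nonneg_left t1 (by positivity)
  have b2 : |b| * ∑' m, P2 m ≤ |b| * (Vnorm k0 lam w * (Hnorm u * Hnorm v)) :=
    mul_le_mul_of_nonneg_left t2 (abs_nonneg _)
  have b3 : |a| * lam⁻¹ * ∑' m, P3 m ≤ |a| * lam⁻¹ * (Vnorm k0 lam w * (Hnorm u * Hnorm v)) :=
    mul_le_mul_of_nonneg_left t3 (by positivity)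
  have b4 : |b| * lam⁻¹ * ∑' m, P4 m ≤ |b| * lam⁻¹ * (Vnorm k0 lam w * (Hnorm u * Hnorm v)) :=
    mul_le_mul_of_nonneg_left t4 (by positivity)
  have : C1 a b lam * Hnorm u * Hnorm v * Vnorm k0 lam w
      = |a| * lam * (Vnorm k0 lam w * (Hnorm u * Hnorm v))
      + |b| * (Vnorm k0 lam w * (Hnorm u * Hnorm v))
      + |a| * lam⁻¹ * (Vnorm k0 lam w * (Hnorm u * Hnorm v))
      + |b| * lam⁻¹ * (Vnorm k0 lam w * (Hnorm u * Hnorm v)) := by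
    rw [C1]; ring
  rw [this]
  exact add_le_add (add_le_add (add_le_add b1 b2) b3) b4


end Sabra
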